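/- Let S_l = {t ∈ [0,2^{-l}) : Σ_{j=0}^{2^{l+1}-1} χ_Γ(t - 1 + j·2^{-l}) ≥ 2} and M_l = ∫_{S_l} Σ_{j=0}^{2^{l+1}-1} χ_Γ(t - 1 + j·2^{-l}) dt for a measurable Γ ⊂ [-1,1]. Then for every integer l ≥ 0, M_l − M_{l−1} ≤ 2·Leb(S_l). -/

import Mathlib

open MeasureTheory Set

private lemma sum_range_two_mul_aux {M : Type*} [AddCommMonoid M] (n : ℕ) (f : ℕ → M) :
    ∑ k ∈ Finset.range (2 * n), f k
      = ∑ j ∈ Finset.range n, f (2 * j) + ∑ j ∈ Finset.range n, f (2 * j + 1) := by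
  induction n with
  | zero => simp
  | succ n ih =>
    rw [Nat.mul_succ, Finset.sum_range_succ, Finset.sum_range_succ (fun j => f (2 * j)),
      Finset.sum_range_succ (fun j => f (2 * j + 1)), Finset.sum_range_succ, ih]
    abel

/-- `M_l − M_{l−1} ≤ 2·Leb(S_l)` for the dyadic counting quantities. -/
theorem stmt_1 (Γ : Set ℝ) (hΓ : Γ ⊆ Icc (-1) 1) (hmeas : MeasurableSet Γ)
    (S : ℤ → Set ℝ)
    (hS : ∀ l : ℤ, S l = {t : ℝ | t ∈ Ico (0:ℝ) ((2:ℝ) ^ (-l)) ∧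
      2 ≤ ∑ j ∈ Finset.range (2 ^ (l + 1).toNat),
        Γ.indicator (fun _ => (1:ℝ)) (t - 1 + (j:ℝ) * (2:ℝ) ^ (-l))})
    (M : ℤ → ℝ)
    (hM : ∀ l : ℤ, M l = ∫ t in S l,
      (∑ j ∈ Finset.range (2 ^ (l + 1).toNat),
        Γ.indicator (fun _ => (1:ℝ)) (t - 1 + (j:ℝ) * (2:ℝ) ^ (-l)))) :
    ∀ l : ℤ, 0 ≤ l → M l - M (l - 1) ≤ 2 * (volume (S l)).toReal := by
  classical
  -- basic objects
  set g : ℝ → ℝ := Γ.indicator (fun _ => (1:ℝ)) with hg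
  have hg_meas : Measurable g := measurable_const.indicator hmeas
  have hg_nonneg : ∀ x, 0 ≤ g x := fun x => Set.indicator_nonneg (fun _ _ => zero_le_one) x
  have hΓfin : volume Γ < ⊤ := by
    refine lt_of_le_of_lt (measure_mono hΓ) ?_
    simp [Real.volume_Icc]
  have hg_int : Integrable g := by
    rw [hg, integrable_indicator_iff hmeas]
    exact integrableOn_const hΓfin.ne
  -- the counting functions
  set F : ℤ → ℝ → ℝ := fun l t =>
    ∑ j ∈ Finset.range (2 ^ (l + 1).toNat), g (t - 1 + (j:ℝ) * (2:ℝ) ^ (-l)) with hF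
  have hF_meas : ∀ l, Measurable (F l) := by
    intro l
    exact Finset.measurable_sum _ fun j _ => hg_meas.comp (by fun_prop)
  have hF_int : ∀ l, Integrable (F l) := by
    intro l
    refine integrable_finset_sum _ fun j _ => ?_
    have : (fun t : ℝ => g (t - 1 + (j:ℝ) * (2:ℝ) ^ (-l)))
        = fun t : ℝ => g (t + ((j:ℝ) * (2:ℝ) ^ (-l) - 1)) := by
      funext t; ring_nf
    rw [this]
    exact hg_int.comp_add_right _
  have hF_nonneg : ∀ l t, 0 ≤ F l t := fun l t =>
    Finset.sum_nonneg fun j _ => hg_nonneg _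
  -- F takes ℕ values
  have hF_nat : ∀ l t, ∃ m : ℕ, F l t = m := by
    intro l t
    refine ⟨((Finset.range (2 ^ (l + 1).toNat)).filter
      (fun j : ℕ => t - 1 + (j:ℝ) * (2:ℝ) ^ (-l) ∈ Γ)).card, ?_⟩
    rw [hF]
    have hite : ∀ j : ℕ, g (t - 1 + (j:ℝ) * (2:ℝ) ^ (-l))
        = if t - 1 + (j:ℝ) * (2:ℝ) ^ (-l) ∈ Γ then (1:ℝ) else 0 :=
      fun j => Set.indicator_apply _ _ _
    simp_rw [hite]
    rw [Finset.sum_boole]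
  have hF_lt_two : ∀ l t, F l t < 2 → F l t ≤ 1 := by
    intro l t h
    obtain ⟨m, hm⟩ := hF_nat l t
    rw [hm] at h ⊢
    exact_mod_cast Nat.lt_succ_iff.mp (by exact_mod_cast h)
  -- S is measurable
  have hS_meas : ∀ l, MeasurableSet (S l) := by
    intro l
    rw [hS l]
    have : {t : ℝ | t ∈ Ico (0:ℝ) ((2:ℝ) ^ (-l)) ∧ 2 ≤ F l t}
        = Ico (0:ℝ) ((2:ℝ) ^ (-l)) ∩ (F l) ⁻¹' (Ici 2) := rfl
    rw [hF] at this
    rw [this]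
    exact measurableSet_Ico.inter ((hF_meas l) measurableSet_Ici)
  intro l hl
  obtain ⟨n, rfl⟩ := Int.eq_ofNat_of_zero_le hl
  -- notation
  set c : ℝ := (2:ℝ) ^ (-(n:ℤ)) with hc
  have hc_pos : 0 < c := zpow_pos (by norm_num) _
  have hd : (2:ℝ) ^ (-((n:ℤ) - 1)) = 2 * c := by
    rw [hc, ← zpow_one_add₀ (two_ne_zero)]
    congr 1; ring
  -- exponents
  have hexp1 : ((n:ℤ) + 1).toNat = n + 1 := by omega
  have hexp2 : ((n:ℤ) - 1 + 1).toNat = n := by omega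
  -- the key doubling identity
  have hkey : ∀ t : ℝ, F n t = F ((n:ℤ) - 1) t + F ((n:ℤ) - 1) (t + c) := by
    intro t
    rw [hF]
    simp only [hexp1, hexp2, hd]
    have h2 : 2 ^ (n + 1) = 2 * 2 ^ n := by ring
    rw [h2, sum_range_two_mul_aux]
    congr 1
    · refine Finset.sum_congr rfl fun j _ => ?_
      congr 1
      push_cast [hc]
      ring
    · refine Finset.sum_congr rfl fun j _ => ?_
      congr 1
      push_cast [hc]
      ring
  -- membership characterizations
  have hSl : ∀ t : ℝ, t ∈ S n ↔ (t ∈ Ico (0:ℝ) c ∧ 2 ≤ F n t) := by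
    intro t; rw [hS]; rfl
  have hSl' : ∀ t : ℝ, t ∈ S ((n:ℤ) - 1) ↔
      (t ∈ Ico (0:ℝ) (2 * c) ∧ 2 ≤ F ((n:ℤ) - 1) t) := by
    intro t; rw [hS]; rw [hF]; simp only [hd]; rfl
  -- split S (n-1)
  set A : Set ℝ := S ((n:ℤ) - 1) ∩ Ico (0:ℝ) c with hA
  set B : Set ℝ := S ((n:ℤ) - 1) ∩ Ico c (2 * c) with hB
  have hAB : S ((n:ℤ) - 1) = A ∪ B := by
    ext t
    simp only [hA, hB, Set.mem_union, Set.mem_inter_iff, Set.mem_Ico]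
    constructor
    · intro ht
      have := (hSl' t).1 ht
      rcases lt_or_ge t c with h | h
      · exact Or.inl ⟨ht, this.1.1, h⟩
      · exact Or.inr ⟨ht, h, this.1.2⟩
    · rintro (⟨h, _⟩ | ⟨h, _⟩) <;> exact h
  have hABdisj : Disjoint A B := by
    refine Set.disjoint_left.2 fun t htA htB => ?_
    exact absurd htA.2.2 (not_lt.2 htB.2.1)
  -- integrability
  have hint : ∀ (l : ℤ) (s : Set ℝ), IntegrableOn (F l) s := fun l s =>
    (hF_int l).integrableOn
  -- pointwise inequality on I = Ico 0 c
  set I : Set ℝ := Ico (0:ℝ) c with hI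
  have hpt : ∀ t ∈ I,
      (S n).indicator (F n) t ≤
        (S ((n:ℤ)-1)).indicator (F ((n:ℤ)-1)) t
        + (S ((n:ℤ)-1)).indicator (F ((n:ℤ)-1)) (t + c)
        + 2 * (S n).indicator (fun _ => (1:ℝ)) t := by
    intro t htI
    by_cases ht : t ∈ S n
    · rw [Set.indicator_of_mem ht, Set.indicator_of_mem ht]
      have h2 : 2 ≤ F (n:ℤ) t := ((hSl t).1 ht).2
      have hab := hkey t
      set a := F ((n:ℤ)-1) t with ha
      set b := F ((n:ℤ)-1) (t + c) with hb
      have haI : t ∈ Ico (0:ℝ) (2*c) := ⟨htI.1, htI.2.trans (by linarith)⟩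
      have hbI : t + c ∈ Ico (0:ℝ) (2*c) := ⟨by nlinarith [htI.1], by nlinarith [htI.2]⟩
      have ha0 : 0 ≤ a := hF_nonneg _ _
      have hb0 : 0 ≤ b := hF_nonneg _ _
      by_cases hta : 2 ≤ a
      · rw [Set.indicator_of_mem ((hSl' t).2 ⟨haI, hta⟩)]
        by_cases htb : 2 ≤ b
        · rw [Set.indicator_of_mem ((hSl' (t+c)).2 ⟨hbI, htb⟩)]
          linarith [hab]
        · rw [Set.indicator_of_notMem (fun hmem => htb ((hSl' (t+c)).1 hmem).2)]
          push_neg at htb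
          linarith [hab]
      · rw [Set.indicator_of_notMem (fun hmem => hta ((hSl' t).1 hmem).2)]
        push_neg at hta
        have ha1 : a ≤ 1 := hF_lt_two _ _ hta
        by_cases htb : 2 ≤ b
        · rw [Set.indicator_of_mem ((hSl' (t+c)).2 ⟨hbI, htb⟩)]
          linarith [hab]
        · rw [Set.indicator_of_notMem (fun hmem => htb ((hSl' (t+c)).1 hmem).2)]
          push_neg at htb
          have hb1 : b ≤ 1 := hF_lt_two _ _ htb
          linarith [hab]
    · rw [Set.indicator_of_notMem ht, Set.indicator_of_notMem ht]
      have h1 : 0 ≤ (S ((n:ℤ)-1)).indicator (F ((n:ℤ)-1)) t :=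
        Set.indicator_nonneg (fun x _ => hF_nonneg _ _) _
      have h2 : 0 ≤ (S ((n:ℤ)-1)).indicator (F ((n:ℤ)-1)) (t + c) :=
        Set.indicator_nonneg (fun x _ => hF_nonneg _ _) _
      linarith
  -- finiteness of S n
  have hSsub : S (n:ℤ) ⊆ I := fun t ht => ((hSl t).1 ht).1
  have hS'sub : S ((n:ℤ)-1) ⊆ Ico (0:ℝ) (2*c) := fun t ht => ((hSl' t).1 ht).1
  have hSnfin : volume (S (n:ℤ)) < ⊤ := by
    refine lt_of_le_of_lt (measure_mono hSsub) ?_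
    simp [hI, Real.volume_Ico]
  -- name the three RHS functions
  set φ : ℝ → ℝ := (S ((n:ℤ)-1)).indicator (F ((n:ℤ)-1)) with hφ
  have hφ_int : Integrable φ := (hF_int _).indicator (hS_meas _)
  have hφc_int : Integrable (fun t => φ (t + c)) := hφ_int.comp_add_right c
  have hι_int : Integrable ((S (n:ℤ)).indicator (fun _ => (1:ℝ))) := by
    rw [integrable_indicator_iff (hS_meas _)]
    exact integrableOn_const hSnfin.ne
  -- step 1 : M n as an integral over I
  have hMn : M (n:ℤ) = ∫ t in I, (S (n:ℤ)).indicator (F (n:ℤ)) t := by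
    rw [hM, setIntegral_indicator (hS_meas _),
      Set.inter_eq_right.2 hSsub]
  -- step 3+4 : M (n-1)
  have hIAint : I ∩ S ((n:ℤ)-1) = A := by rw [hA, Set.inter_comm]
  have hstep3 : ∫ t in I, φ t = ∫ t in A, F ((n:ℤ)-1) t := by
    rw [hφ, setIntegral_indicator (hS_meas _), hIAint]
  have hptB : ∀ x : ℝ, I.indicator (fun t => φ (t + c)) x
      = (Ico c (2*c)).indicator φ (x + c) := by
    intro x
    by_cases hx : x ∈ I
    · rw [Set.indicator_of_mem hx, Set.indicator_of_mem]
      exact ⟨by linarith [hx.1, hx.2, (Set.mem_Ico.1 hx).1], by linarith [(Set.mem_Ico.1 hx).2]⟩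
    · rw [Set.indicator_of_notMem hx, Set.indicator_of_notMem]
      intro hmem
      exact hx ⟨by linarith [hmem.1], by linarith [hmem.2]⟩
  have hstep4 : ∫ t in I, (fun s => φ (s + c)) t = ∫ t in B, F ((n:ℤ)-1) t := by
    rw [← integral_indicator (measurableSet_Ico : MeasurableSet I)]
    calc ∫ x, I.indicator (fun t => φ (t + c)) x
        = ∫ x, (Ico c (2*c)).indicator φ (x + c) := by
          congr 1; funext x; exact hptB x
      _ = ∫ x, (Ico c (2*c)).indicator φ x := integral_add_right_eq_self _ c
      _ = ∫ x in Ico c (2*c), φ x := integral_indicator measurableSet_Ico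
      _ = ∫ x in Ico c (2*c) ∩ S ((n:ℤ)-1), F ((n:ℤ)-1) x := by
          rw [hφ, setIntegral_indicator (hS_meas _)]
      _ = ∫ t in B, F ((n:ℤ)-1) t := by rw [hB, Set.inter_comm]
  have hMn1 : M ((n:ℤ)-1) = (∫ t in I, φ t) + ∫ t in I, (fun s => φ (s + c)) t := by
    rw [hM, hstep3, hstep4]
    show ∫ t in S ((n:ℤ)-1), F ((n:ℤ)-1) t = _
    rw [hAB, setIntegral_union hABdisj ((hS_meas _).inter measurableSet_Ico) (hint _ A) (hint _ B)]
  -- step 5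
  have hstep5 : ∫ t in I, 2 * (S (n:ℤ)).indicator (fun _ => (1:ℝ)) t
      = 2 * (volume (S (n:ℤ))).toReal := by
    rw [integral_const_mul]
    congr 1
    rw [setIntegral_indicator (hS_meas _), Set.inter_eq_right.2 hSsub]
    simp [setIntegral_const, Measure.real]
  -- step 6 : monotonicity
  have hmono : ∫ t in I, (S (n:ℤ)).indicator (F (n:ℤ)) t
      ≤ ∫ t in I, (φ t + φ (t + c) + 2 * (S (n:ℤ)).indicator (fun _ => (1:ℝ)) t) := by
    refine setIntegral_mono_on ((hF_int _).indicator (hS_meas _)).integrableOn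
      ((hφ_int.add hφc_int).add (hι_int.const_mul 2)).integrableOn
      measurableSet_Ico hpt
  have hsplit : ∫ t in I, (φ t + φ (t + c) + 2 * (S (n:ℤ)).indicator (fun _ => (1:ℝ)) t)
      = (∫ t in I, φ t) + (∫ t in I, (fun s => φ (s + c)) t)
        + ∫ t in I, 2 * (S (n:ℤ)).indicator (fun _ => (1:ℝ)) t := by
    have h12 : Integrable (fun t => φ t + φ (t + c)) := hφ_int.add hφc_int
    have h3 : Integrable (fun t => 2 * (S (n:ℤ)).indicator (fun _ => (1:ℝ)) t) :=
      hι_int.const_mul 2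
    rw [integral_add h12.integrableOn h3.integrableOn,
      integral_add hφ_int.integrableOn hφc_int.integrableOn]
  rw [hMn, hMn1, ← hstep5]
  rw [hsplit] at hmono
  linarith
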